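/- Let Λ be the thermal channel Λ(X) = Tr_R(U (ρ_R ⊗ X) U†) induced by an energy-conserving unitary U and a diagonal bath state ρ_R, and assume H_S has a non-degenerate Bohr spectrum. Then: (a) for every pair i ≠ j there exists a complex number λ_{ij} such that Λ(E_{ij}) = λ_{ij} • E_{ij}; and (b) for every i, the matrix Λ(E_{ii}) is diagonal. -/

import Mathlib

open Matrix Kronecker

/-- Partial trace over the reservoir `R`: `(Tr_R M)_{s,s'} = ∑_r M_{(r,s),(r,s')}`. -/
noncomputable def ptrR {m n : ℕ} (M : Matrix (Fin m × Fin n) (Fin m × Fin n) ℂ) :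
    Matrix (Fin n) (Fin n) ℂ :=
  Matrix.of fun s s' => ∑ r, M (r, s) (r, s')

/-- If `H_S` has a non-degenerate Bohr spectrum, then the thermal channel
`Λ(X) = Tr_R (U (ρ_R ⊗ X) U†)` is block-diagonal: (a) off-diagonal matrix units
are just damped, `Λ(E_{ij}) = λ_{ij} • E_{ij}` for `i ≠ j`; and (b) `Λ(E_{ii})`
is diagonal for every `i`. -/
theorem thermal_channel_block_diagonal (m n : ℕ) (hm : 1 ≤ m) (hn : 1 ≤ n)
    (H_R : Fin m → ℝ) (H_S : Fin n → ℝ)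
    (hinj : Function.Injective H_S)
    (hBohr : ∀ i j k l : Fin n, i ≠ j → k ≠ l →
      H_S i - H_S j = H_S k - H_S l → i = k ∧ j = l)
    (U : Matrix (Fin m × Fin n) (Fin m × Fin n) ℂ)
    (hU : U ∈ Matrix.unitaryGroup (Fin m × Fin n) ℂ)
    (hUH : U * Matrix.diagonal (fun p => ((H_R p.1 + H_S p.2 : ℝ) : ℂ))
         = Matrix.diagonal (fun p => ((H_R p.1 + H_S p.2 : ℝ) : ℂ)) * U)
    (ρ : Fin m → ℝ) (hρ : ∀ r, 0 ≤ ρ r) (hρ1 : ∑ r, ρ r = 1)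
    (Λ : Matrix (Fin n) (Fin n) ℂ → Matrix (Fin n) (Fin n) ℂ)
    (hΛ : ∀ X, Λ X = ptrR (U * ((Matrix.diagonal fun r => ((ρ r : ℝ) : ℂ)) ⊗ₖ X) * Uᴴ)) :
    (∀ i j : Fin n, i ≠ j → ∃ lam : ℂ,
        Λ (Matrix.single i j 1) = lam • Matrix.single i j 1) ∧
    (∀ i : Fin n, (Λ (Matrix.single i i 1)).IsDiag) := by
  -- Energy conservation: off-energy-shell entries of U vanish.
  have hU0 : ∀ p q : Fin m × Fin n,
      H_R p.1 + H_S p.2 ≠ H_R q.1 + H_S q.2 → U p q = 0 := by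
    intro p q h
    have h2 := congrFun (congrFun hUH p) q
    rw [Matrix.mul_diagonal, Matrix.diagonal_mul] at h2
    have h3 : U p q * (((H_R q.1 + H_S q.2 : ℝ) : ℂ) - ((H_R p.1 + H_S p.2 : ℝ) : ℂ)) = 0 := by
      ring_nf
      linear_combination h2
    rcases mul_eq_zero.mp h3 with h4 | h4
    · exact h4
    · exfalso
      apply h
      have := sub_eq_zero.mp h4
      exact_mod_cast this.symm
  -- Key vanishing lemma.
  have key : ∀ i j s s' : Fin n, H_S s - H_S s' ≠ H_S i - H_S j →
      Λ (Matrix.single i j 1) s s' = 0 := by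
    intro i j s s' h
    rw [hΛ, ptrR]
    simp only [Matrix.of_apply]
    apply Finset.sum_eq_zero
    intro r _
    rw [Matrix.mul_apply]
    apply Finset.sum_eq_zero
    intro k _
    rw [Matrix.mul_apply, Finset.sum_mul]
    apply Finset.sum_eq_zero
    intro l _
    by_cases hl : U (r, s) l = 0
    · simp [hl]
    by_cases hk : U (r, s') k = 0
    · simp [Matrix.conjTranspose_apply, hk]
    have e1 : H_R r + H_S s = H_R l.1 + H_S l.2 := by
      by_contra hc; exact hl (hU0 _ _ hc)
    have e2 : H_R r + H_S s' = H_R k.1 + H_S k.2 := by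
      by_contra hc; exact hk (hU0 _ _ hc)
    -- Show the middle factor is zero.
    have hmid : ((Matrix.diagonal fun r => ((ρ r : ℝ) : ℂ)) ⊗ₖ
        Matrix.single i j 1) l k = 0 := by
      rcases l with ⟨a, b⟩
      rcases k with ⟨c, d⟩
      rw [Matrix.kroneckerMap_apply]
      by_cases hac : a = c
      · subst hac
        by_cases hbi : b = i
        · by_cases hdj : d = j
          · exfalso
            apply h
            subst hbi; subst hdj
            simp only [] at e1 e2
            linarith
          · simp only [Matrix.single, Matrix.of_apply]
            simp [hbi]
            exact fun h' => absurd h'.symm hdj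
        · simp [Matrix.single, Ne.symm hbi]
      · simp [Matrix.diagonal_apply_ne _ hac]
    rw [hmid]
    ring
  constructor
  · intro i j hij
    refine ⟨Λ (Matrix.single i j 1) i j, ?_⟩
    ext s s'
    by_cases hcase : s = i ∧ s' = j
    · obtain ⟨rfl, rfl⟩ := hcase
      simp [Matrix.smul_apply, Matrix.single_apply_same]
    · have hz : Λ (Matrix.single i j 1) s s' = 0 := by
        apply key
        intro he
        by_cases hss : s = s'
        · subst hss
          simp at he
          exact hij (hinj (by linarith))
        · obtain ⟨h1, h2⟩ := hBohr s s' i j hss hij he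
          exact hcase ⟨h1, h2⟩
      rw [hz]
      have : Matrix.single i j (1 : ℂ) s s' = 0 := by
        rcases not_and_or.mp hcase with h | h
        · exact Matrix.single_apply_of_ne _ _ _ _ _ (by tauto)
        · exact Matrix.single_apply_of_ne _ _ _ _ _ (by tauto)
      simp [this]
  · intro i s s' hss
    apply key
    intro he
    simp at he
    exact hss (hinj (by linarith))
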